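/- Let A = {A_i}_{i=1}^{N_A} be a discrete POVM on ℂ^d with Lüders channel Φ^A_L. Then for every density matrix ρ, F(Φ^A_L(ρ), ρ)² ≥ 1/N_A; that is, the fidelity-based maximal disturbance satisfies D_F^max(Φ^A_L) = 1 − (inf over density matrices ρ of F(Φ^A_L(ρ), ρ))² ≤ 1 − 1/N_A. -/

import Mathlib

open scoped BigOperators ComplexOrder
open Matrix

noncomputable section

/-- A projective observable: a finite family of mutually orthogonal
self-adjoint idempotents summing to the identity. -/
def IsProjObs {d r : ℕ} (P : Fin r → Matrix (Fin d) (Fin d) ℂ) : Prop :=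
  (∀ i, (P i).IsHermitian) ∧ (∀ i, P i * P i = P i) ∧
    (∀ i k, i ≠ k → P i * P k = 0) ∧ (∑ i, P i = 1)

/-- A density matrix: positive semidefinite with unit trace. -/
def IsDensity {d : ℕ} (ρ : Matrix (Fin d) (Fin d) ℂ) : Prop :=
  ρ.PosSemidef ∧ ρ.trace = 1

/-- The measurement channel `E^A(ρ) = Σ_i P_i ρ P_i` of a projective observable. -/
def measChannel {d r : ℕ} (P : Fin r → Matrix (Fin d) (Fin d) ℂ)
    (ρ : Matrix (Fin d) (Fin d) ℂ) : Matrix (Fin d) (Fin d) ℂ :=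
  ∑ i, P i * ρ * P i

/-- `p^B_ρ(j) = tr(P^B_j ρ)`. -/
def probB {d rB : ℕ} (Q : Fin rB → Matrix (Fin d) (Fin d) ℂ)
    (ρ : Matrix (Fin d) (Fin d) ℂ) (j : Fin rB) : ℝ :=
  ((Q j * ρ).trace).re

/-- `q^{A→B}_ρ(j) = tr(P^B_j Σ_i P^A_i ρ P^A_i)`. -/
def probAB {d rA rB : ℕ} (P : Fin rA → Matrix (Fin d) (Fin d) ℂ)
    (Q : Fin rB → Matrix (Fin d) (Fin d) ℂ)
    (ρ : Matrix (Fin d) (Fin d) ℂ) (j : Fin rB) : ℝ :=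
  ((Q j * measChannel P ρ).trace).re

open Classical in
/-- The positive semidefinite square root of a PSD matrix (junk value `0` otherwise). -/
noncomputable def msqrt {d : ℕ} (A : Matrix (Fin d) (Fin d) ℂ) :
    Matrix (Fin d) (Fin d) ℂ :=
  if h : A.PosSemidef then
    (h.1.eigenvectorUnitary : Matrix (Fin d) (Fin d) ℂ) *
      Matrix.diagonal (fun i => ((Real.sqrt (h.1.eigenvalues i) : ℝ) : ℂ)) *
      star (h.1.eigenvectorUnitary : Matrix (Fin d) (Fin d) ℂ)
  else 0

/-- `|X| = √(Xᴴ X)`, the positive semidefinite absolute value of a matrix. -/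
noncomputable def matAbs {d : ℕ} (X : Matrix (Fin d) (Fin d) ℂ) :
    Matrix (Fin d) (Fin d) ℂ :=
  msqrt (Xᴴ * X)

/-- The quantum fidelity `F(ρ,σ) = tr √(√ρ σ √ρ)`. -/
noncomputable def qFid {d : ℕ} (ρ σ : Matrix (Fin d) (Fin d) ℂ) : ℝ :=
  ((msqrt (msqrt ρ * σ * msqrt ρ)).trace).re

/-- Variational distance `D_1(p,q) = (1/2) Σ_j |p_j − q_j|`. -/
def distL1 {rB : ℕ} (p q : Fin rB → ℝ) : ℝ := (1 / 2) * ∑ j, |p j - q j|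

/-- Chebyshev distance `D_∞(p,q) = max_j |p_j − q_j|`. -/
noncomputable def distLinf {rB : ℕ} (p q : Fin rB → ℝ) : ℝ := ⨆ j, |p j - q j|

/-- Classical fidelity `F(p,q) = Σ_j √(p_j q_j)`. -/
noncomputable def classFid {rB : ℕ} (p q : Fin rB → ℝ) : ℝ :=
  ∑ j, Real.sqrt (p j * q j)

/-- `Q_1(A→B)`. -/
noncomputable def Q1 {d rA rB : ℕ} (P : Fin rA → Matrix (Fin d) (Fin d) ℂ)
    (Q : Fin rB → Matrix (Fin d) (Fin d) ℂ) : ℝ :=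
  sSup {x : ℝ | ∃ ρ, IsDensity ρ ∧ x = distL1 (probAB P Q ρ) (probB Q ρ)}

/-- `Q_∞(A→B)`. -/
noncomputable def Qinf {d rA rB : ℕ} (P : Fin rA → Matrix (Fin d) (Fin d) ℂ)
    (Q : Fin rB → Matrix (Fin d) (Fin d) ℂ) : ℝ :=
  sSup {x : ℝ | ∃ ρ, IsDensity ρ ∧ x = distLinf (probAB P Q ρ) (probB Q ρ)}

/-- `Q_F(A→B)`. -/
noncomputable def QF {d rA rB : ℕ} (P : Fin rA → Matrix (Fin d) (Fin d) ℂ)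
    (Q : Fin rB → Matrix (Fin d) (Fin d) ℂ) : ℝ :=
  sSup {x : ℝ | ∃ ρ, IsDensity ρ ∧
    x = 1 - (classFid (probAB P Q ρ) (probB Q ρ)) ^ 2}

/-- The rank-one projection `|v⟩⟨v|` onto a (unit) vector `v`. -/
def proj {d : ℕ} (v : Fin d → ℂ) : Matrix (Fin d) (Fin d) ℂ :=
  Matrix.vecMulVec v (star v)

/-- A discrete POVM: positive semidefinite effects summing to the identity. -/
def IsPOVM {d N : ℕ} (A : Fin N → Matrix (Fin d) (Fin d) ℂ) : Prop :=
  (∀ i, (A i).PosSemidef) ∧ ∑ i, A i = 1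

/-- The Lüders channel `Φ^A_L(ρ) = Σ_i √A_i ρ √A_i` of a POVM. -/
noncomputable def luders {d N : ℕ} (A : Fin N → Matrix (Fin d) (Fin d) ℂ)
    (ρ : Matrix (Fin d) (Fin d) ℂ) : Matrix (Fin d) (Fin d) ℂ :=
  ∑ i, msqrt (A i) * ρ * msqrt (A i)

section helperlemmas
open Matrix Polynomial
variable {d : ℕ}

lemma msqrt_of_psd {A : Matrix (Fin d) (Fin d) ℂ} (hA : A.PosSemidef) : msqrt A =
    (hA.1.eigenvectorUnitary : Matrix (Fin d) (Fin d) ℂ) *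
      Matrix.diagonal (fun i => ((Real.sqrt (hA.1.eigenvalues i) : ℝ) : ℂ)) *
      star (hA.1.eigenvectorUnitary : Matrix (Fin d) (Fin d) ℂ) :=
  dif_pos hA

lemma msqrt_psd {A : Matrix (Fin d) (Fin d) ℂ} (hA : A.PosSemidef) : (msqrt A).PosSemidef := by
  rw [msqrt_of_psd hA, Matrix.star_eq_conjTranspose]
  exact Matrix.PosSemidef.mul_mul_conjTranspose_same
    (Matrix.posSemidef_diagonal_iff.mpr fun i => Complex.zero_le_real.mpr (Real.sqrt_nonneg _)) _

lemma msqrt_mul_self {A : Matrix (Fin d) (Fin d) ℂ} (hA : A.PosSemidef) :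
    msqrt A * msqrt A = A := by
  rw [msqrt_of_psd hA]
  set U : Matrix (Fin d) (Fin d) ℂ := (hA.1.eigenvectorUnitary : Matrix (Fin d) (Fin d) ℂ) with hU
  have hUU : star U * U = 1 := Matrix.UnitaryGroup.star_mul_self _
  conv_rhs => rw [hA.1.spectral_theorem]
  simp only [Unitary.conjStarAlgAut_apply, Unitary.coe_star, ← hU]
  simp only [Matrix.mul_assoc]
  rw [← Matrix.mul_assoc (star U) U, hUU, Matrix.one_mul, ← Matrix.mul_assoc (diagonal _) (diagonal _),
    Matrix.diagonal_mul_diagonal]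
  refine congrArg (fun M => U * (diagonal M * star U)) (funext fun i => ?_)
  rw [← Complex.ofReal_mul, Real.mul_self_sqrt (hA.eigenvalues_nonneg i)]
  rfl

lemma msqrt_herm {A : Matrix (Fin d) (Fin d) ℂ} (hA : A.PosSemidef) :
    (msqrt A)ᴴ = msqrt A := (msqrt_psd hA).1

lemma psd_sum {ι : Type*} (s : Finset ι) (f : ι → Matrix (Fin d) (Fin d) ℂ)
    (h : ∀ i ∈ s, (f i).PosSemidef) : (∑ i ∈ s, f i).PosSemidef := by
  classical
  induction s using Finset.induction_on with
  | empty => simpa using Matrix.PosSemidef.zero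
  | insert _ _ hi ih =>
    rw [Finset.sum_insert hi]
    exact ((h _ (Finset.mem_insert_self _ _)).add
      (ih fun i hix => h i (Finset.mem_insert_of_mem hix)))

lemma trace_re_nonneg {A : Matrix (Fin d) (Fin d) ℂ} (hA : A.PosSemidef) : 0 ≤ A.trace.re := by
  have h : ∀ i, 0 ≤ (A i i).re := by
    intro i
    have := hA.re_dotProduct_nonneg (Pi.single i 1)
    simpa [dotProduct, mulVec, Pi.single_apply] using this
  have : 0 ≤ ∑ i, (A i i).re := Finset.sum_nonneg fun i _ => h i
  simpa [Matrix.trace, Matrix.diag, Complex.re_sum] using this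

lemma smul_psd {A : Matrix (Fin d) (Fin d) ℂ} {r : ℝ} (hr : 0 ≤ r) (hA : A.PosSemidef) :
    ((r : ℂ) • A).PosSemidef := by
  constructor
  · unfold Matrix.IsHermitian
    rw [Matrix.conjTranspose_smul, hA.1.eq]
    congr 1
    simp [Complex.ext_iff]
  · exact (hA.smul (a := (r : ℂ)) (by exact_mod_cast Complex.zero_le_real.mpr hr)).2

lemma loewner_sqrt {X Y : Matrix (Fin d) (Fin d) ℂ} (hX : X.PosSemidef) (hY : Y.PosSemidef)
    (h : (Y * Y - X * X).PosSemidef) : (Y - X).PosSemidef := by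
  have hM : (X - Y).IsHermitian := hX.1.sub hY.1
  have key : ∀ i, hM.eigenvalues i ≤ 0 := by
    intro i
    by_contra hlt
    push_neg at hlt
    set lam : ℝ := hM.eigenvalues i with hlam
    set v : Fin d → ℂ := ⇑(hM.eigenvectorBasis i) with hv
    have hvec : (X - Y) *ᵥ v = (lam : ℝ) • v := hM.mulVec_eigenvectorBasis i
    have hvne : v ≠ 0 := by
      intro h0
      have h1 := (hM.eigenvectorBasis).toBasis.ne_zero i
      apply h1
      ext j
      have := congrFun h0 j
      simpa using this
    set a : ℂ := star v ⬝ᵥ (X *ᵥ v) with ha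
    set b : ℂ := star v ⬝ᵥ (Y *ᵥ v) with hb
    have ha0 : 0 ≤ a := hX.dotProduct_mulVec_nonneg v
    have hb0 : 0 ≤ b := hY.dotProduct_mulVec_nonneg v
    have hc0 : 0 ≤ star v ⬝ᵥ ((Y * Y - X * X) *ᵥ v) := h.dotProduct_mulVec_nonneg v
    have hid : X * X - Y * Y = X * (X - Y) + (X - Y) * Y := by noncomm_ring
    have e1 : star v ⬝ᵥ ((X * (X - Y)) *ᵥ v) = (lam : ℂ) * a := by
      rw [← Matrix.mulVec_mulVec, hvec]
      rw [Matrix.mulVec_smul]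
      rw [dotProduct_smul, ha, Complex.real_smul]
    have e2 : star v ⬝ᵥ (((X - Y) * Y) *ᵥ v) = (lam : ℂ) * b := by
      rw [← Matrix.mulVec_mulVec, Matrix.dotProduct_mulVec]
      have hsv : star v ᵥ* (X - Y) = (lam : ℂ) • star v := by
        have h5 : star v ᵥ* (X - Y) = star ((X - Y)ᴴ *ᵥ v) := by
          rw [Matrix.star_mulVec, Matrix.conjTranspose_conjTranspose]
        rw [h5, hM.eq, hvec]
        ext j
        simp [Complex.real_smul, Complex.conj_ofReal]
      rw [hsv, smul_dotProduct, hb, smul_eq_mul]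
    have e3 : star v ⬝ᵥ ((Y * Y - X * X) *ᵥ v) = -((lam : ℂ) * (a + b)) := by
      have : star v ⬝ᵥ ((X * X - Y * Y) *ᵥ v) = (lam : ℂ) * (a + b) := by
        rw [hid, Matrix.add_mulVec, dotProduct_add, e1, e2]; ring
      have h4 : (Y * Y - X * X) = -(X * X - Y * Y) := by noncomm_ring
      rw [h4, Matrix.neg_mulVec, dotProduct_neg, this]
    have hln : (0:ℂ) ≤ (lam : ℂ) * (a + b) :=
      mul_nonneg (by exact_mod_cast Complex.zero_le_real.mpr hlt.le) (add_nonneg ha0 hb0)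
    have hzero : (lam : ℂ) * (a + b) = 0 := le_antisymm (by rw [← neg_nonneg, ← e3]; exact hc0) hln
    have hab : a + b = 0 := by
      have hl0 : (lam : ℂ) ≠ 0 := by exact_mod_cast ne_of_gt hlt
      exact (mul_eq_zero.mp hzero).resolve_left hl0
    have ha' : a = 0 :=
      le_antisymm (by rw [eq_neg_of_add_eq_zero_left hab]; exact neg_nonpos.mpr hb0) ha0
    have hb' : b = 0 :=
      le_antisymm (by rw [eq_neg_of_add_eq_zero_right hab]; exact neg_nonpos.mpr ha0) hb0
    have hXv : X *ᵥ v = 0 := (hX.dotProduct_mulVec_zero_iff v).mp (by rw [← ha, ha'])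
    have hYv : Y *ᵥ v = 0 := (hY.dotProduct_mulVec_zero_iff v).mp (by rw [← hb, hb'])
    have hzv : (lam : ℝ) • v = 0 := by
      rw [← hvec, Matrix.sub_mulVec, hXv, hYv, sub_zero]
    rcases smul_eq_zero.mp hzv with h1 | h2
    · exact (ne_of_gt hlt) (by exact_mod_cast h1)
    · exact hvne h2
  have hspec := hM.spectral_theorem
  set U : Matrix (Fin d) (Fin d) ℂ := (hM.eigenvectorUnitary : Matrix (Fin d) (Fin d) ℂ) with hU
  set D : Matrix (Fin d) (Fin d) ℂ := Matrix.diagonal (RCLike.ofReal ∘ hM.eigenvalues) with hD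
  have hYX : Y - X = U * (-D) * Uᴴ := by
    have : Y - X = -(X - Y) := by noncomm_ring
    rw [this, hspec]
    simp only [Unitary.conjStarAlgAut_apply, Unitary.coe_star, ← hU]
    rw [← Matrix.star_eq_conjTranspose]
    noncomm_ring
  rw [hYX]
  refine Matrix.PosSemidef.mul_mul_conjTranspose_same ?_ U
  rw [hD]
  rw [show (-Matrix.diagonal (RCLike.ofReal ∘ hM.eigenvalues)) =
      Matrix.diagonal (fun i => ((-(hM.eigenvalues i) : ℝ) : ℂ)) by
    ext i j; by_cases hij : i = j <;> simp [hij, Matrix.diagonal_apply]]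
  refine Matrix.PosSemidef.diagonal ?_
  intro i
  exact Complex.zero_le_real.mpr (neg_nonneg.mpr (key i))

lemma trace_conj_unitary (U : Matrix.unitaryGroup (Fin d) ℂ) (D : Matrix (Fin d) (Fin d) ℂ) :
    ((U : Matrix (Fin d) (Fin d) ℂ) * D * star (U : Matrix (Fin d) (Fin d) ℂ)).trace = D.trace := by
  rw [Matrix.trace_mul_cycle, Matrix.UnitaryGroup.star_mul_self, Matrix.one_mul]

lemma det_conj_unitary (U : Matrix.unitaryGroup (Fin d) ℂ) (D : Matrix (Fin d) (Fin d) ℂ) :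
    ((U : Matrix (Fin d) (Fin d) ℂ) * D * star (U : Matrix (Fin d) (Fin d) ℂ)).det = D.det := by
  rw [Matrix.det_mul, Matrix.det_mul, mul_comm, ← mul_assoc, ← Matrix.det_mul,
    Matrix.UnitaryGroup.star_mul_self, Matrix.det_one, one_mul]

lemma det_smul_one_sub_eq_prod {A : Matrix (Fin d) (Fin d) ℂ} (hA : A.IsHermitian) (t : ℂ) :
    (t • (1 : Matrix (Fin d) (Fin d) ℂ) - A).det = ∏ i, (t - (hA.eigenvalues i : ℂ)) := by
  set U := hA.eigenvectorUnitary with hU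
  set D : Matrix (Fin d) (Fin d) ℂ := Matrix.diagonal (RCLike.ofReal ∘ hA.eigenvalues) with hD
  have h1 : t • (1 : Matrix (Fin d) (Fin d) ℂ) - A
      = (U : Matrix (Fin d) (Fin d) ℂ) * (t • 1 - D) * star (U : Matrix (Fin d) (Fin d) ℂ) := by
    rw [Matrix.mul_sub, Matrix.sub_mul]
    congr 1
    · rw [Matrix.mul_smul, Matrix.smul_mul, Matrix.mul_one]
      congr 1
      exact (Matrix.mem_unitaryGroup_iff.mp U.2).symm
    · exact hA.spectral_theorem
  rw [h1, det_conj_unitary]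
  have h2 : t • (1 : Matrix (Fin d) (Fin d) ℂ) - D
      = Matrix.diagonal (fun i => t - (hA.eigenvalues i : ℂ)) := by
    ext i j
    by_cases hij : i = j <;>
      simp [hD, hij, Matrix.diagonal_apply, Matrix.one_apply]
  rw [h2, Matrix.det_diagonal]

lemma trace_msqrt_eq_sum {A : Matrix (Fin d) (Fin d) ℂ} (hA : A.PosSemidef) :
    (msqrt A).trace = ∑ i, ((Real.sqrt (hA.1.eigenvalues i)) : ℂ) := by
  rw [msqrt_of_psd hA]
  rw [trace_conj_unitary hA.1.eigenvectorUnitary, Matrix.trace_diagonal]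

lemma det_char_mul_comm (A B : Matrix (Fin d) (Fin d) ℂ) (t : ℂ) :
    (t • (1 : Matrix (Fin d) (Fin d) ℂ) - A * B).det
      = (t • (1 : Matrix (Fin d) (Fin d) ℂ) - B * A).det := by
  by_cases ht : t = 0
  · subst ht
    simp only [zero_smul, zero_sub, Matrix.det_neg, Matrix.det_mul]
    ring
  · have key : ∀ M N : Matrix (Fin d) (Fin d) ℂ,
        t • (1 : Matrix (Fin d) (Fin d) ℂ) - M * N
          = t • ((1 : Matrix (Fin d) (Fin d) ℂ) + (-(t⁻¹) • M) * N) := by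
      intro M N
      simp [Matrix.smul_mul, smul_add, smul_smul, mul_neg, mul_inv_cancel₀ ht,
        sub_eq_add_neg]
    rw [key A B, key B A, Matrix.det_smul, Matrix.det_smul]
    congr 1
    have := Matrix.det_one_add_mul_comm (-(t⁻¹) • A) B
    rw [this]
    congr 2
    rw [Matrix.mul_smul, Matrix.smul_mul]

lemma multiset_eigs_eq {A B : Matrix (Fin d) (Fin d) ℂ} (hA : A.IsHermitian) (hB : B.IsHermitian)
    (hdet : ∀ t : ℂ, (t • (1 : Matrix (Fin d) (Fin d) ℂ) - A).det
      = (t • (1 : Matrix (Fin d) (Fin d) ℂ) - B).det) :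
    (Finset.univ.val.map fun i => (hA.eigenvalues i : ℂ))
      = (Finset.univ.val.map fun i => (hB.eigenvalues i : ℂ)) := by
  set s : Multiset ℂ := Finset.univ.val.map fun i => (hA.eigenvalues i : ℂ) with hs
  set s' : Multiset ℂ := Finset.univ.val.map fun i => (hB.eigenvalues i : ℂ) with hs'
  have hev : ∀ (u : Multiset ℂ) (t : ℂ),
      ((u.map fun a => X - C a).prod).eval t = (u.map fun a => t - a).prod := by
    intro u t
    rw [Polynomial.eval_multiset_prod, Multiset.map_map]
    congr 1
    apply Multiset.map_congr rfl
    intro a _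
    simp
  have hp : ((s.map fun a => X - C a).prod) = ((s'.map fun a => X - C a).prod) := by
    apply Polynomial.funext
    intro t
    rw [hev, hev, hs, hs', Multiset.map_map, Multiset.map_map]
    calc ((Finset.univ.val.map ((fun a => t - a) ∘ fun i => (hA.eigenvalues i : ℂ)))).prod
        = ∏ i, (t - (hA.eigenvalues i : ℂ)) := rfl
      _ = (t • (1 : Matrix (Fin d) (Fin d) ℂ) - A).det := (det_smul_one_sub_eq_prod hA t).symm
      _ = (t • (1 : Matrix (Fin d) (Fin d) ℂ) - B).det := hdet t
      _ = ∏ i, (t - (hB.eigenvalues i : ℂ)) := det_smul_one_sub_eq_prod hB t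
      _ = ((Finset.univ.val.map ((fun a => t - a) ∘ fun i => (hB.eigenvalues i : ℂ)))).prod := rfl
  have hroots := congrArg Polynomial.roots hp
  rwa [Polynomial.roots_multiset_prod_X_sub_C, Polynomial.roots_multiset_prod_X_sub_C] at hroots

lemma trace_msqrt_congr {A B : Matrix (Fin d) (Fin d) ℂ} (hA : A.PosSemidef) (hB : B.PosSemidef)
    (hdet : ∀ t : ℂ, (t • (1 : Matrix (Fin d) (Fin d) ℂ) - A).det
      = (t • (1 : Matrix (Fin d) (Fin d) ℂ) - B).det) :
    (msqrt A).trace = (msqrt B).trace := by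
  rw [trace_msqrt_eq_sum hA, trace_msqrt_eq_sum hB]
  have hms := multiset_eigs_eq hA.1 hB.1 hdet
  have key : ∀ (f : Fin d → ℝ),
      ∑ i, ((Real.sqrt (f i)) : ℂ)
        = (((Finset.univ.val.map fun i => ((f i : ℝ) : ℂ))).map
            (fun z => ((Real.sqrt z.re : ℝ) : ℂ))).sum := by
    intro f
    rw [Multiset.map_map]
    rfl
  rw [key, key, hms]

end helperlemmas


set_option maxHeartbeats 1600000 in
lemma gap_psd {d NA : ℕ} (Y : Fin NA → Matrix (Fin d) (Fin d) ℂ)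
    (hYpsd : ∀ i, (Y i).PosSemidef) :
    ((NA : ℂ) • (∑ i, Y i * Y i) - (∑ i, Y i) * (∑ i, Y i)).PosSemidef := by
  classical
  set S := ∑ i, Y i * Y i with hSsum
  set T := ∑ i, Y i with hT
  have hcard : ∀ M : Matrix (Fin d) (Fin d) ℂ, ∑ _j : Fin NA, M = (NA : ℂ) • M := by
    intro M
    rw [Finset.sum_const, Finset.card_univ, Fintype.card_fin, Nat.cast_smul_eq_nsmul]
  have hexp : ∀ i j : Fin NA, (Y i - Y j) * (Y i - Y j)
      = Y i * Y i + Y j * Y j - Y i * Y j - Y j * Y i := fun i j => by noncomm_ring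
  have hGpsd : (∑ i, ∑ j, (Y i - Y j) * (Y i - Y j)).PosSemidef := by
    refine psd_sum _ _ fun i _ => psd_sum _ _ fun j _ => ?_
    have hherm : (Y i - Y j)ᴴ = Y i - Y j := (((hYpsd i).1).sub ((hYpsd j).1))
    have := Matrix.posSemidef_conjTranspose_mul_self (Y i - Y j)
    rwa [hherm] at this
  have s1 : ∑ i : Fin NA, ∑ _j : Fin NA, Y i * Y i = (NA : ℂ) • S := by
    rw [hSsum, Finset.smul_sum]
    exact Finset.sum_congr rfl fun i _ => hcard _
  have s2 : ∑ _i : Fin NA, ∑ j : Fin NA, Y j * Y j = (NA : ℂ) • S := hcard _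
  have s3 : ∑ i : Fin NA, ∑ j : Fin NA, Y i * Y j = T * T := by
    rw [hT, Finset.sum_mul_sum]
  have s4 : ∑ i : Fin NA, ∑ j : Fin NA, Y j * Y i = T * T := by
    have inner : ∀ i, ∑ j : Fin NA, Y j * Y i = T * Y i := fun i => by
      rw [hT, Finset.sum_mul]
    rw [Finset.sum_congr rfl fun i _ => inner i, ← Finset.mul_sum]
  have hGeq : (∑ i, ∑ j, (Y i - Y j) * (Y i - Y j))
      = (NA : ℂ) • S + (NA : ℂ) • S - T * T - T * T := by
    calc (∑ i, ∑ j, (Y i - Y j) * (Y i - Y j))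
        = ∑ i, ∑ j, (Y i * Y i + Y j * Y j - Y i * Y j - Y j * Y i) :=
          Finset.sum_congr rfl fun i _ => Finset.sum_congr rfl fun j _ => hexp i j
      _ = (∑ i, ∑ _j : Fin NA, Y i * Y i) + (∑ _i : Fin NA, ∑ j, Y j * Y j)
            - (∑ i, ∑ j, Y i * Y j) - (∑ i, ∑ j, Y j * Y i) := by
          simp only [Finset.sum_sub_distrib, Finset.sum_add_distrib]
      _ = (NA : ℂ) • S + (NA : ℂ) • S - T * T - T * T := by rw [s1, s2, s3, s4]
  have hhalf : (NA : ℂ) • S - T * T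
      = (((1:ℝ)/2 : ℝ) : ℂ) • (∑ i, ∑ j, (Y i - Y j) * (Y i - Y j)) := by
    rw [hGeq]
    have h2 : (NA : ℂ) • S + (NA : ℂ) • S - T * T - T * T
        = (2 : ℂ) • ((NA : ℂ) • S - T * T) := by
      rw [two_smul]
      abel
    rw [h2, smul_smul]
    norm_num
  rw [hhalf]
  exact smul_psd (by norm_num) hGpsd

set_option maxHeartbeats 1600000 in
theorem stmt_16 {d NA : ℕ} (hd : 0 < d)
    (A : Fin NA → Matrix (Fin d) (Fin d) ℂ) (hA : IsPOVM A) :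
    (∀ ρ : Matrix (Fin d) (Fin d) ℂ, IsDensity ρ → (qFid (luders A ρ) ρ) ^ 2 ≥ 1 / (NA : ℝ)) ∧
      1 - (sInf {x : ℝ | ∃ ρ, IsDensity ρ ∧ x = qFid (luders A ρ) ρ}) ^ 2
        ≤ 1 - 1 / (NA : ℝ) := by
  classical
  obtain ⟨hApsd, hAsum⟩ := hA
  have hNA : 0 < NA := by
    rcases Nat.eq_zero_or_pos NA with h0 | h
    · subst h0
      have h1 : (0 : Matrix (Fin d) (Fin d) ℂ) = 1 := by simpa using hAsum
      have h2 := congrFun (congrFun h1 ⟨0, hd⟩) ⟨0, hd⟩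
      simp [Matrix.one_apply] at h2
    · exact h
  set c : ℝ := Real.sqrt NA with hc
  have hc0 : 0 < c := Real.sqrt_pos.mpr (by exact_mod_cast hNA)
  have hcc : (c : ℂ) * (c : ℂ) = (NA : ℂ) := by
    rw [← Complex.ofReal_mul, Real.mul_self_sqrt (Nat.cast_nonneg NA)]
    norm_num
  -- The key estimate : fidelity is at least 1/√NA for every density matrix
  have key : ∀ ρ : Matrix (Fin d) (Fin d) ℂ, IsDensity ρ → 1 / c ≤ qFid (luders A ρ) ρ := by
    intro ρ hρd
    obtain ⟨hρpsd, hρtr⟩ := hρd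
    set R := msqrt ρ with hR
    have hRpsd : R.PosSemidef := msqrt_psd hρpsd
    have hRH : Rᴴ = R := msqrt_herm hρpsd
    have hRR : R * R = ρ := msqrt_mul_self hρpsd
    set K : Fin NA → Matrix (Fin d) (Fin d) ℂ := fun i => msqrt (A i) with hK
    have hKpsd : ∀ i, (K i).PosSemidef := fun i => msqrt_psd (hApsd i)
    have hKK : ∀ i, K i * K i = A i := fun i => msqrt_mul_self (hApsd i)
    set σ := luders A ρ with hσ
    have hσpsd : σ.PosSemidef := by
      rw [hσ, luders]
      refine psd_sum _ _ fun i _ => ?_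
      have := hρpsd.conjTranspose_mul_mul_same (msqrt (A i))
      rwa [msqrt_herm (hApsd i)] at this
    set Y : Fin NA → Matrix (Fin d) (Fin d) ℂ := fun i => R * K i * R with hY
    have hYpsd : ∀ i, (Y i).PosSemidef := by
      intro i
      have := (hKpsd i).conjTranspose_mul_mul_same R
      rwa [hRH] at this
    set T := ∑ i, Y i with hT
    have hTpsd : T.PosSemidef := psd_sum _ _ fun i _ => hYpsd i
    set S := R * σ * R with hS
    have hSpsd : S.PosSemidef := by
      have := hσpsd.conjTranspose_mul_mul_same R
      rwa [hRH] at this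
    have hSsum : S = ∑ i, Y i * Y i := by
      rw [hS, hσ, luders, Finset.mul_sum, Finset.sum_mul]
      refine Finset.sum_congr rfl fun i _ => ?_
      rw [hY]
      simp only
      rw [← hRR]
      noncomm_ring
    have hgap : ((NA : ℂ) • S - T * T).PosSemidef := by
      rw [hSsum, hT]
      exact gap_psd Y hYpsd
    set W := (c : ℂ) • msqrt S with hW
    have hWpsd : W.PosSemidef := smul_psd hc0.le (msqrt_psd hSpsd)
    have hWW : W * W = (NA : ℂ) • S := by
      rw [hW, Matrix.smul_mul, Matrix.mul_smul, smul_smul, msqrt_mul_self hSpsd, hcc]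
    have hTW : (W - T).PosSemidef := loewner_sqrt hTpsd hWpsd (by rw [hWW]; exact hgap)
    -- lower bound the trace of T
    have hterm : ∀ i, ((ρ * A i).trace).re ≤ ((Y i).trace).re := by
      intro i
      have htr1 : (Y i).trace = (ρ * K i).trace := by
        rw [hY]
        simp only
        rw [Matrix.trace_mul_cycle R (K i) R, hRR]
      have h1Ai : ((1 : Matrix (Fin d) (Fin d) ℂ) - A i).PosSemidef := by
        have hsum := Finset.add_sum_erase Finset.univ A (Finset.mem_univ i)
        have h2 : (1 : Matrix (Fin d) (Fin d) ℂ) - A i = ∑ j ∈ Finset.univ.erase i, A j := by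
          rw [← hAsum, ← hsum]
          abel
        rw [h2]
        exact psd_sum _ _ fun j _ => hApsd j
      have hK1 : ((1 : Matrix (Fin d) (Fin d) ℂ) - K i).PosSemidef := by
        refine loewner_sqrt (hKpsd i) Matrix.PosSemidef.one ?_
        rw [Matrix.one_mul, hKK i]
        exact h1Ai
      have hKA : (K i - A i).PosSemidef := by
        set L := msqrt (K i) with hL
        have hLH : Lᴴ = L := msqrt_herm (hKpsd i)
        have hLL : L * L = K i := msqrt_mul_self (hKpsd i)
        have hform : K i - A i = Lᴴ * ((1 : Matrix (Fin d) (Fin d) ℂ) - K i) * L := by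
          rw [hLH, ← hKK i, ← hLL]
          noncomm_ring
        rw [hform]
        exact hK1.conjTranspose_mul_mul_same L
      have hdiff : 0 ≤ ((ρ * (K i - A i)).trace).re := by
        have hcy : ((ρ * (K i - A i)).trace) = ((R * (K i - A i) * R).trace) := by
          rw [← hRR]
          exact (Matrix.trace_mul_cycle R (K i - A i) R).symm
        rw [hcy]
        refine trace_re_nonneg ?_
        have := hKA.conjTranspose_mul_mul_same R
        rwa [hRH] at this
      have hsplit : (ρ * K i).trace = (ρ * A i).trace + (ρ * (K i - A i)).trace := by
        rw [← Matrix.trace_add, ← Matrix.mul_add]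
        congr 1
        noncomm_ring
      rw [htr1, hsplit, Complex.add_re]
      linarith
    have hsumA : ∑ i, ((ρ * A i).trace).re = 1 := by
      have h1 : ∑ i, (ρ * A i).trace = ρ.trace := by
        rw [← Matrix.trace_sum, ← Finset.mul_sum, hAsum, Matrix.mul_one]
      have h2 : (∑ i, (ρ * A i).trace).re = (1:ℂ).re := by rw [h1, hρtr]
      rw [Complex.re_sum] at h2
      simpa using h2
    have htrT : 1 ≤ T.trace.re := by
      have h1 : T.trace = ∑ i, (Y i).trace := by rw [hT, Matrix.trace_sum]
      have h2 : T.trace.re = ∑ i, ((Y i).trace).re := by rw [h1, Complex.re_sum]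
      rw [h2, ← hsumA]
      exact Finset.sum_le_sum fun i _ => hterm i
    have hTleW : T.trace.re ≤ W.trace.re := by
      have h0 := trace_re_nonneg hTW
      rw [Matrix.trace_sub, Complex.sub_re] at h0
      linarith
    have hWre : W.trace.re = c * (msqrt S).trace.re := by
      rw [hW, Matrix.trace_smul, smul_eq_mul]
      simp [Complex.mul_re]
    have hfinal : 1 / c ≤ (msqrt S).trace.re := by
      rw [div_le_iff₀ hc0]
      nlinarith
    have hq : qFid σ ρ = (msqrt S).trace.re := by
      have hrfl : qFid σ ρ = ((msqrt (msqrt σ * ρ * msqrt σ)).trace).re := rfl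
      rw [hrfl]
      apply congrArg Complex.re
      set P := msqrt σ with hP
      have hPH : Pᴴ = P := msqrt_herm hσpsd
      have hPP : P * P = σ := msqrt_mul_self hσpsd
      have hS2psd : (P * ρ * P).PosSemidef := by
        have := hρpsd.conjTranspose_mul_mul_same P
        rwa [hPH] at this
      refine trace_msqrt_congr hS2psd hSpsd ?_
      intro t
      calc (t • (1 : Matrix (Fin d) (Fin d) ℂ) - P * ρ * P).det
          = (t • (1 : Matrix (Fin d) (Fin d) ℂ) - P * (P * ρ)).det :=
            det_char_mul_comm (P * ρ) P t
        _ = (t • (1 : Matrix (Fin d) (Fin d) ℂ) - σ * ρ).det := by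
            rw [← Matrix.mul_assoc, hPP]
        _ = (t • (1 : Matrix (Fin d) (Fin d) ℂ) - ρ * σ).det := det_char_mul_comm σ ρ t
        _ = (t • (1 : Matrix (Fin d) (Fin d) ℂ) - R * (R * σ)).det := by
            rw [← Matrix.mul_assoc, hRR]
        _ = (t • (1 : Matrix (Fin d) (Fin d) ℂ) - R * σ * R).det :=
            (det_char_mul_comm (R * σ) R t).symm
        _ = (t • (1 : Matrix (Fin d) (Fin d) ℂ) - S).det := by rw [hS]
    rw [hq]
    exact hfinal
  have hinv : ((1:ℝ) / c) ^ 2 = 1 / (NA : ℝ) := by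
    rw [div_pow, one_pow, hc, Real.sq_sqrt (Nat.cast_nonneg NA)]
  constructor
  · intro ρ hρd
    have h1 := key ρ hρd
    have h2 : ((1:ℝ) / c) ^ 2 ≤ (qFid (luders A ρ) ρ) ^ 2 :=
      pow_le_pow_left₀ (by positivity) h1 2
    rw [hinv] at h2
    exact h2
  · set Sset : Set ℝ := {x : ℝ | ∃ ρ, IsDensity ρ ∧ x = qFid (luders A ρ) ρ} with hSset
    have hρ0 : IsDensity (((d : ℝ)⁻¹ : ℂ) • (1 : Matrix (Fin d) (Fin d) ℂ)) := by
      constructor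
      · rw [show (((d : ℝ) : ℂ))⁻¹ = ((((d : ℝ)⁻¹ : ℝ)) : ℂ) by push_cast; ring]
        exact smul_psd (by positivity) Matrix.PosSemidef.one
      · rw [Matrix.trace_smul, Matrix.trace_one, smul_eq_mul]
        have hd0 : (d : ℝ) ≠ 0 := by positivity
        simp only [Fintype.card_fin]
        rw [show ((d : ℝ)⁻¹ : ℂ) * (d : ℂ) = 1 by
          push_cast
          field_simp]
    have hne : Sset.Nonempty :=
      ⟨qFid (luders A (((d : ℝ)⁻¹ : ℂ) • 1)) (((d : ℝ)⁻¹ : ℂ) • 1),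
        ⟨((d : ℝ)⁻¹ : ℂ) • 1, hρ0, rfl⟩⟩
    have hlb : ∀ x ∈ Sset, 1 / c ≤ x := by
      rintro x ⟨ρ, hρd, rfl⟩
      exact key ρ hρd
    have hsinf : 1 / c ≤ sInf Sset := le_csInf hne hlb
    have hsq : ((1:ℝ) / c) ^ 2 ≤ (sInf Sset) ^ 2 := pow_le_pow_left₀ (by positivity) hsinf 2
    rw [hinv] at hsq
    linarith


end
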